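/- arXiv:0805.3792 — 4 statements merged into one kernel-verified Lean document; each statement's English description precedes it below -/
import Mathlib

section
/- (James blocking lemma) Let v_1, …, v_{m^2} be elements of a normed space V with ‖v_j‖ ≥ 1 for all j, and suppose for some β ≥ 1 that ‖∑_{j=1}^{m^2} t_j v_j‖ ≤ β·max_j |t_j| for all scalars (t_j). Then there exist v'_1, …, v'_m in V with ‖v'_i‖ ≥ 1 for all i such that ‖∑_{i=1}^m t_i v'_i‖ ≤ β^{1/2}·max_i |t_i| for all scalars (t_i). -/
/-- James blocking lemma: from `m²` vectors of norm at least `1` whose linear combinations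
are bounded by `β·max|tⱼ|`, one extracts `m` vectors (in their span) of norm at least `1`
whose combinations are bounded by `√β·max|tᵢ|`. -/
theorem stmt_3 {V : Type*} [NormedAddCommGroup V] [NormedSpace ℝ V]
    (m : ℕ) (hm : 1 ≤ m) (β : ℝ) (hβ : 1 ≤ β)
    (v : Fin (m ^ 2) → V) (hv : ∀ j, 1 ≤ ‖v j‖)
    (hupper : ∀ t : Fin (m ^ 2) → ℝ, ‖∑ j, t j • v j‖ ≤ β * ⨆ j, |t j|) :
    ∃ v' : Fin m → V,
      (∀ i, v' i ∈ Submodule.span ℝ (Set.range v)) ∧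
      (∀ i, 1 ≤ ‖v' i‖) ∧
      ∀ t : Fin m → ℝ, ‖∑ i, t i • v' i‖ ≤ Real.sqrt β * ⨆ i, |t i| := by
  have hm2 : 0 < m ^ 2 := by positivity
  haveI : NeZero m := ⟨by omega⟩
  haveI : NeZero (m ^ 2) := ⟨hm2.ne'⟩
  have hβ0 : (0 : ℝ) < β := lt_of_lt_of_le one_pos hβ
  have hsβ : (0 : ℝ) < Real.sqrt β := Real.sqrt_pos.mpr hβ0
  let e : Fin m × Fin m ≃ Fin (m ^ 2) := finProdFinEquiv.trans (finCongr (sq m).symm)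
  by_cases H : ∃ i : Fin m, ∀ s : Fin m → ℝ,
      ‖∑ k, s k • v (e (i, k))‖ ≤ Real.sqrt β * ⨆ k, |s k|
  · obtain ⟨i, hi⟩ := H
    exact ⟨fun k => v (e (i, k)), fun k => Submodule.subset_span ⟨_, rfl⟩,
      fun k => hv _, hi⟩
  · push_neg at H
    choose s hs using H
    set M : Fin m → ℝ := fun i => ⨆ k, |s i k| with hMdef
    have hMle : ∀ i k, |s i k| ≤ M i := fun i k => le_ciSup (Finite.bddAbove_range fun k => |s i k|) k
    have hM0 : ∀ i, 0 < M i := by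
      intro i
      rcases lt_or_ge 0 (M i) with h | h
      · exact h
      · exfalso
        have hz : ∀ k, s i k = 0 := by
          intro k
          have h1 : |s i k| ≤ 0 := (hMle i k).trans h
          have h2 : (0 : ℝ) ≤ |s i k| := abs_nonneg _
          exact abs_eq_zero.mp (le_antisymm h1 h2)
        have hMnn : 0 ≤ M i := le_trans (abs_nonneg _) (hMle i ⟨0, by omega⟩)
        have hlt := hs i
        have hMz : (⨆ k, |s i k|) = 0 := le_antisymm h hMnn
        rw [hMz, mul_zero] at hlt
        simp only [hz, zero_smul, Finset.sum_const_zero, norm_zero] at hlt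
        exact lt_irrefl 0 hlt
    set v' : Fin m → V :=
      fun i => (M i)⁻¹ • (Real.sqrt β)⁻¹ • ∑ k, s i k • v (e (i, k)) with hv'def
    refine ⟨v', ?_, ?_, ?_⟩
    · intro i
      exact Submodule.smul_mem _ _ (Submodule.smul_mem _ _ (Submodule.sum_mem _
        fun k _ => Submodule.smul_mem _ _ (Submodule.subset_span ⟨_, rfl⟩)))
    · intro i
      have h1 : Real.sqrt β * M i < ‖∑ k, s i k • v (e (i, k))‖ := hs i
      have h2 : (0 : ℝ) < Real.sqrt β * M i := mul_pos hsβ (hM0 i)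
      have hnorm : ‖v' i‖ =
          (M i)⁻¹ * ((Real.sqrt β)⁻¹ * ‖∑ k, s i k • v (e (i, k))‖) := by
        rw [hv'def]
        rw [norm_smul, norm_smul, Real.norm_eq_abs, Real.norm_eq_abs,
          abs_of_pos (inv_pos.mpr (hM0 i)), abs_of_pos (inv_pos.mpr hsβ)]
      rw [hnorm, ← div_eq_inv_mul, ← div_eq_inv_mul, le_div_iff₀ (hM0 i), one_mul,
        le_div_iff₀ hsβ]
      nlinarith
    · intro t
      set T : ℝ := ⨆ i, |t i| with hTdef
      have hT0 : 0 ≤ T :=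
        le_trans (abs_nonneg (t ⟨0, by omega⟩))
          (le_ciSup (Finite.bddAbove_range fun i => |t i|) (⟨0, by omega⟩ : Fin m))
      set u : Fin (m ^ 2) → ℝ :=
        fun j => t (e.symm j).1 * ((M (e.symm j).1)⁻¹ * s (e.symm j).1 (e.symm j).2)
        with hudef
      have hsum : ∑ j, u j • v j =
          ∑ i, ∑ k, (t i * ((M i)⁻¹ * s i k)) • v (e (i, k)) := by
        rw [← Equiv.sum_comp e (fun j => u j • v j), Fintype.sum_prod_type]
        simp [hudef]
      have hsum2 : ∑ i, t i • v' i = (Real.sqrt β)⁻¹ • ∑ j, u j • v j := by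
        rw [hsum, Finset.smul_sum]
        refine Finset.sum_congr rfl fun i _ => ?_
        rw [Finset.smul_sum, hv'def]
        simp only [Finset.smul_sum]
        refine Finset.sum_congr rfl fun k _ => ?_
        rw [smul_smul, smul_smul, smul_smul, smul_smul]
        congr 1
        ring
      have hu : ∀ j, |u j| ≤ T := by
        intro j
        have hMi := hM0 (e.symm j).1
        have habs : |u j| = |t (e.symm j).1| *
            ((M (e.symm j).1)⁻¹ * |s (e.symm j).1 (e.symm j).2|) := by
          rw [hudef, abs_mul, abs_mul, abs_inv, abs_of_pos hMi]
        have hle1 : (M (e.symm j).1)⁻¹ * |s (e.symm j).1 (e.symm j).2| ≤ 1 := by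
          rw [inv_mul_le_iff₀ hMi, mul_one]
          exact hMle _ _
        have hle2 : (0 : ℝ) ≤ (M (e.symm j).1)⁻¹ * |s (e.symm j).1 (e.symm j).2| :=
          mul_nonneg (inv_pos.mpr hMi).le (abs_nonneg _)
        calc |u j| ≤ |t (e.symm j).1| * 1 := by
              rw [habs]; exact mul_le_mul_of_nonneg_left hle1 (abs_nonneg _)
          _ = |t (e.symm j).1| := mul_one _
          _ ≤ T := le_ciSup (Finite.bddAbove_range fun i => |t i|) _
      have hsupu : (⨆ j, |u j|) ≤ T := ciSup_le hu
      calc ‖∑ i, t i • v' i‖ = (Real.sqrt β)⁻¹ * ‖∑ j, u j • v j‖ := by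
            rw [hsum2, norm_smul, Real.norm_eq_abs, abs_of_pos (inv_pos.mpr hsβ)]
        _ ≤ (Real.sqrt β)⁻¹ * (β * ⨆ j, |u j|) := by
            exact mul_le_mul_of_nonneg_left (hupper u) (inv_pos.mpr hsβ).le
        _ ≤ (Real.sqrt β)⁻¹ * (β * T) := by
            exact mul_le_mul_of_nonneg_left
              (mul_le_mul_of_nonneg_left hsupu hβ0.le) (inv_pos.mpr hsβ).le
        _ = Real.sqrt β * T := by
            field_simp
            nlinarith [Real.mul_self_sqrt hβ0.le]
end

section
/- (Dichotomy in James blocking) Let v_1, …, v_{m^2} be vectors in a normed space with ‖∑ t_j v_j‖ ≤ β·max|t_j| for all scalars, β ≥ 1, and ‖v_j‖ ≥ 1 for all j. If for every subset σ of size m there exists a choice of signs (ε_i)_{i∈σ} with ‖∑_{i∈σ} ε_i v_i‖ > β^{1/2}, then for any partition of {1,…,m^2} into m sets σ_1,…,σ_m of size m, the vectors w_j = β^{-1/2} ∑_{i∈σ_j} ε_i^{(j)} v_i (with signs chosen so that ‖∑_{i∈σ_j} ε_i^{(j)} v_i‖ > β^{1/2}) satisfy ‖w_j‖ > 1 for all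 j and ‖∑_j t_j w_j‖ ≤ β^{1/2}·max_j |t_j| for all scalars (t_j). -/
/-- The dichotomy step in James' blocking argument: if every `m`-element subset of the `m²`
vectors admits signs making the norm of the signed sum exceed `√β`, then for any partition
into `m` sets of size `m` with such signs, the normalized blocks `wⱼ = β^{-1/2} ∑_{i∈σⱼ} εᵢʲ vᵢ`
have norm `> 1` and satisfy `‖∑ tⱼ wⱼ‖ ≤ √β · max|tⱼ|`. -/
theorem stmt_4 {V : Type*} [NormedAddCommGroup V] [NormedSpace ℝ V]
    (m : ℕ) (hm : 1 ≤ m) (β : ℝ) (hβ : 1 ≤ β)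
    (v : Fin (m ^ 2) → V) (hv : ∀ j, 1 ≤ ‖v j‖)
    (hupper : ∀ t : Fin (m ^ 2) → ℝ, ‖∑ j, t j • v j‖ ≤ β * ⨆ j, |t j|)
    (hsign : ∀ σ' : Finset (Fin (m ^ 2)), σ'.card = m →
      ∃ ε' : Fin (m ^ 2) → ℝ, (∀ i, ε' i = 1 ∨ ε' i = -1) ∧
        Real.sqrt β < ‖∑ i ∈ σ', ε' i • v i‖)
    (σ : Fin m → Finset (Fin (m ^ 2)))
    (hdisj : Pairwise fun j j' => Disjoint (σ j) (σ j'))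
    (hcard : ∀ j, (σ j).card = m)
    (hcover : ∀ i, ∃ j, i ∈ σ j)
    (ε : Fin m → Fin (m ^ 2) → ℝ)
    (hε : ∀ j i, ε j i = 1 ∨ ε j i = -1)
    (hεnorm : ∀ j, Real.sqrt β < ‖∑ i ∈ σ j, ε j i • v i‖) :
    (∀ j, 1 < ‖(Real.sqrt β)⁻¹ • ∑ i ∈ σ j, ε j i • v i‖) ∧
      ∀ t : Fin m → ℝ,
        ‖∑ j, t j • ((Real.sqrt β)⁻¹ • ∑ i ∈ σ j, ε j i • v i)‖
          ≤ Real.sqrt β * ⨆ j, |t j| := by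
  classical
  have hβ0 : (0:ℝ) < β := lt_of_lt_of_le one_pos hβ
  have hs1 : (1:ℝ) ≤ Real.sqrt β := by
    rw [show (1:ℝ) = Real.sqrt 1 by simp]
    exact Real.sqrt_le_sqrt hβ
  have hs0 : (0:ℝ) < Real.sqrt β := lt_of_lt_of_le one_pos hs1
  haveI : Nonempty (Fin (m ^ 2)) := ⟨⟨0, by nlinarith⟩⟩
  haveI : Nonempty (Fin m) := ⟨⟨0, hm⟩⟩
  constructor
  · intro j
    rw [norm_smul, Real.norm_eq_abs, abs_of_pos (inv_pos.2 hs0)]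
    calc (1:ℝ) = (Real.sqrt β)⁻¹ * Real.sqrt β := by field_simp
    _ < (Real.sqrt β)⁻¹ * ‖∑ i ∈ σ j, ε j i • v i‖ := by
        exact mul_lt_mul_of_pos_left (hεnorm j) (inv_pos.2 hs0)
  · intro t
    choose f hf using hcover
    have huniq : ∀ j i, i ∈ σ j → f i = j := by
      intro j i hi
      by_contra h
      exact Finset.disjoint_left.1 (hdisj h) (hf i) hi
    set s : Fin (m ^ 2) → ℝ := fun i => t (f i) * ε (f i) i with hsdef
    have hrw : ∑ j, t j • ((Real.sqrt β)⁻¹ • ∑ i ∈ σ j, ε j i • v i)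
        = (Real.sqrt β)⁻¹ • ∑ i, s i • v i := by
      simp_rw [smul_comm (t _) ((Real.sqrt β)⁻¹), ← Finset.smul_sum]
      congr 1
      have hbi : (Finset.univ : Finset (Fin (m ^ 2))) = Finset.univ.biUnion σ := by
        ext i
        simp only [Finset.mem_univ, Finset.mem_biUnion, true_iff, true_and]
        exact ⟨f i, hf i⟩
      rw [hbi, Finset.sum_biUnion]
      · refine Finset.sum_congr rfl fun j _ => ?_
        rw [Finset.smul_sum]
        refine Finset.sum_congr rfl fun i hi => ?_
        simp only [hsdef, huniq j i hi, smul_smul]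
      · intro a _ b _ hab
        exact hdisj hab
    rw [hrw, norm_smul, Real.norm_eq_abs, abs_of_pos (inv_pos.2 hs0)]
    have h2 : (⨆ i, |s i|) ≤ ⨆ j, |t j| := by
      refine ciSup_le fun i => ?_
      have hsi : |s i| = |t (f i)| := by
        rcases hε (f i) i with h | h <;> simp [hsdef, abs_mul, h]
      rw [hsi]
      exact le_ciSup (f := fun j => |t j|) (Set.Finite.bddAbove (Set.finite_range _)) (f i)
    have hkey : (Real.sqrt β)⁻¹ * β = Real.sqrt β := by
      rw [← Real.mul_self_sqrt hβ0.le]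
      field_simp
      rw [Real.sqrt_sq hs0.le]
    calc (Real.sqrt β)⁻¹ * ‖∑ i, s i • v i‖
        ≤ (Real.sqrt β)⁻¹ * (β * ⨆ j, |t j|) := by
          apply mul_le_mul_of_nonneg_left _ (inv_pos.2 hs0).le
          exact (hupper s).trans (mul_le_mul_of_nonneg_left h2 hβ0.le)
    _ = Real.sqrt β * ⨆ j, |t j| := by rw [← mul_assoc, hkey]
end

section
/- (Talagrand's upper ℓ_∞ extraction, statement) Let z_1, …, z_s be vectors in a normed space. Set M_1 = E‖∑_{i=1}^s ε_i z_i‖ (expectation over i.i.d. uniform signs ε_i ∈ {±1}) and w = max over all sign choices of ‖∑_{i=1}^s ε_i z_i‖. Then there exists a subset τ ⊆ {1,…,s} with |τ| ≥ s·M_1/(2w) such that for all scalars (t_i): ‖∑_{i∈τ} t_i z_i‖ ≤ 4·M_1·max_{i∈τ}|t_i|. -/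
open Finset

namespace Stmt5Aux

variable {V : Type*} [NormedAddCommGroup V] [NormedSpace ℝ V]

/-- sign value of a boolean -/
def sv (b : Bool) : ℝ := if b then 1 else -1

lemma sv_not (b : Bool) : sv (!b) = - sv b := by cases b <;> simp [sv]

/-- the dual unit ball -/
def dball (V : Type*) [NormedAddCommGroup V] [NormedSpace ℝ V] : Set (V →L[ℝ] ℝ) :=
  {f | ‖f‖ ≤ 1}

lemma dball_nonempty : (dball V).Nonempty := ⟨0, by simp [dball]⟩

lemma abs_apply_le {f : V →L[ℝ] ℝ} (hf : f ∈ dball V) (x : V) : |f x| ≤ ‖x‖ := by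
  calc |f x| ≤ ‖f‖ * ‖x‖ := f.le_opNorm x
  _ ≤ 1 * ‖x‖ := by have : (0:ℝ) ≤ ‖x‖ := norm_nonneg x; exact mul_le_mul_of_nonneg_right hf this
  _ = ‖x‖ := one_mul _

lemma bdd_of_le {F : (V →L[ℝ] ℝ) → ℝ} {Λ : ℝ} (h : ∀ f ∈ dball V, F f ≤ Λ) :
    BddAbove (F '' dball V) := by
  refine ⟨Λ, ?_⟩
  rintro x ⟨f, hf, rfl⟩
  exact h f hf

variable {s : ℕ} (z : Fin s → V)

/-- the sup of `∑ c i * |f (z i)|` over the dual ball -/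
noncomputable def T (c : Fin s → ℝ) : ℝ :=
  sSup ((fun f : V →L[ℝ] ℝ => ∑ i, c i * |f (z i)|) '' dball V)

lemma T_fun_le {c : Fin s → ℝ} {f : V →L[ℝ] ℝ} (hf : f ∈ dball V) :
    ∑ i, c i * |f (z i)| ≤ ∑ i, |c i| * ‖z i‖ := by
  refine Finset.sum_le_sum fun i _ => ?_
  calc c i * |f (z i)| ≤ |c i| * |f (z i)| :=
        mul_le_mul_of_nonneg_right (le_abs_self (c i)) (abs_nonneg _)
  _ ≤ |c i| * ‖z i‖ := mul_le_mul_of_nonneg_left (abs_apply_le hf _) (abs_nonneg _)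

lemma T_bdd (c : Fin s → ℝ) :
    BddAbove ((fun f : V →L[ℝ] ℝ => ∑ i, c i * |f (z i)|) '' dball V) :=
  bdd_of_le fun f hf => T_fun_le z hf

lemma le_T {c : Fin s → ℝ} {f : V →L[ℝ] ℝ} (hf : f ∈ dball V) :
    ∑ i, c i * |f (z i)| ≤ T z c :=
  le_csSup (T_bdd z c) ⟨f, hf, rfl⟩

lemma T_le {c : Fin s → ℝ} {a : ℝ} (h : ∀ f ∈ dball V, ∑ i, c i * |f (z i)| ≤ a) :
    T z c ≤ a := by
  refine csSup_le (dball_nonempty.image _) ?_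
  rintro x ⟨f, hf, rfl⟩
  exact h f hf

lemma T_nonneg (c : Fin s → ℝ) : 0 ≤ T z c := by
  have h0 : (0:ℝ) = ∑ i, c i * |(0 : V →L[ℝ] ℝ) (z i)| := by simp
  rw [h0]
  exact le_T z (by simp [dball])

lemma T_add_le (c c' : Fin s → ℝ) : T z (fun i => c i + c' i) ≤ T z c + T z c' := by
  refine T_le z fun f hf => ?_
  have : ∑ i, (c i + c' i) * |f (z i)| = (∑ i, c i * |f (z i)|) + ∑ i, c' i * |f (z i)| := by
    rw [← Finset.sum_add_distrib]; exact Finset.sum_congr rfl fun i _ => by ring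
  rw [this]
  exact add_le_add (le_T z hf) (le_T z hf)


noncomputable def Sv (ε : Fin s → Bool) : V := ∑ i, sv (ε i) • z i

def flipOff (B : Finset (Fin s)) (ε : Fin s → Bool) : Fin s → Bool :=
  fun i => if i ∈ B then ε i else !(ε i)

lemma flipOff_inv (B : Finset (Fin s)) : Function.Involutive (flipOff B) := by
  intro ε; funext i; by_cases h : i ∈ B <;> simp [flipOff, h]

lemma pairing (B : Finset (Fin s)) :
    ∑ ε : Fin s → Bool, ‖∑ i ∈ B, sv (ε i) • z i‖ ≤ ∑ ε : Fin s → Bool, ‖Sv z ε‖ := by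
  have key : ∀ ε : Fin s → Bool,
      ∑ i ∈ B, sv (ε i) • z i = (2⁻¹:ℝ) • (Sv z ε + Sv z (flipOff B ε)) := by
    intro ε
    have hoff : ∀ i ∈ (univ : Finset (Fin s)), i ∉ B →
        (sv (ε i) + sv (flipOff B ε i)) • z i = 0 := by
      intro i _ hi
      rw [show flipOff B ε i = !(ε i) from if_neg hi, sv_not]
      simp
    have h1 : Sv z ε + Sv z (flipOff B ε) = ∑ i, (sv (ε i) + sv (flipOff B ε i)) • z i := by
      rw [Sv, Sv, ← Finset.sum_add_distrib]
      exact Finset.sum_congr rfl fun i _ => (add_smul _ _ _).symm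
    have h2 : ∑ i, (sv (ε i) + sv (flipOff B ε i)) • z i
        = ∑ i ∈ B, (sv (ε i) + sv (flipOff B ε i)) • z i :=
      (Finset.sum_subset (Finset.subset_univ B) hoff).symm
    have h3 : ∑ i ∈ B, (sv (ε i) + sv (flipOff B ε i)) • z i
        = (2:ℝ) • ∑ i ∈ B, sv (ε i) • z i := by
      rw [Finset.smul_sum]
      refine Finset.sum_congr rfl fun i hi => ?_
      rw [show flipOff B ε i = ε i from if_pos hi, smul_smul]
      congr 1; ring
    rw [h1, h2, h3, smul_smul]
    norm_num
  have hnorm : ∀ ε : Fin s → Bool,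
      ‖∑ i ∈ B, sv (ε i) • z i‖ ≤ 2⁻¹ * (‖Sv z ε‖ + ‖Sv z (flipOff B ε)‖) := by
    intro ε
    rw [key ε, norm_smul]
    have : ‖Sv z ε + Sv z (flipOff B ε)‖ ≤ ‖Sv z ε‖ + ‖Sv z (flipOff B ε)‖ := norm_add_le _ _
    calc ‖(2⁻¹:ℝ)‖ * ‖Sv z ε + Sv z (flipOff B ε)‖
        = 2⁻¹ * ‖Sv z ε + Sv z (flipOff B ε)‖ := by norm_num
      _ ≤ 2⁻¹ * (‖Sv z ε‖ + ‖Sv z (flipOff B ε)‖) := by linarith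
  have hflip : ∑ ε : Fin s → Bool, ‖Sv z (flipOff B ε)‖ = ∑ ε : Fin s → Bool, ‖Sv z ε‖ :=
    Fintype.sum_equiv ((flipOff_inv (s := s) B).toPerm) _ _ (fun ε => rfl)
  calc ∑ ε : Fin s → Bool, ‖∑ i ∈ B, sv (ε i) • z i‖
      ≤ ∑ ε : Fin s → Bool, 2⁻¹ * (‖Sv z ε‖ + ‖Sv z (flipOff B ε)‖) :=
        Finset.sum_le_sum fun ε _ => hnorm ε
    _ = 2⁻¹ * ((∑ ε : Fin s → Bool, ‖Sv z ε‖) + ∑ ε : Fin s → Bool, ‖Sv z (flipOff B ε)‖) := by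
        rw [← Finset.mul_sum, Finset.sum_add_distrib]
    _ = ∑ ε : Fin s → Bool, ‖Sv z ε‖ := by rw [hflip]; ring


lemma two_point (a b : (V →L[ℝ] ℝ) → ℝ) (Λ : ℝ) (hab : ∀ f ∈ dball V, |a f| + |b f| ≤ Λ) :
    sSup ((fun f => a f + |b f|) '' dball V) + sSup ((fun f => a f - |b f|) '' dball V)
      ≤ sSup ((fun f => a f + b f) '' dball V) + sSup ((fun f => a f - b f) '' dball V) := by
  have h1 : BddAbove ((fun f => a f + b f) '' dball V) := bdd_of_le fun f hf => by
    have h := hab f hf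
    have h2 := le_abs_self (a f); have h3 := le_abs_self (b f); linarith
  have h2 : BddAbove ((fun f => a f - b f) '' dball V) := bdd_of_le fun f hf => by
    have h := hab f hf
    have h2 := le_abs_self (a f); have h3 := neg_abs_le (b f); linarith
  rw [← le_sub_iff_add_le]
  refine csSup_le (dball_nonempty.image _) ?_
  rintro x ⟨f, hf, rfl⟩
  rw [le_sub_iff_add_le, add_comm, ← le_sub_iff_add_le]
  refine csSup_le (dball_nonempty.image _) ?_
  rintro y ⟨g, hg, rfl⟩
  rw [le_sub_iff_add_le]
  beta_reduce
  have hf1 : a f + b f ≤ sSup ((fun f => a f + b f) '' dball V) := le_csSup h1 ⟨f, hf, rfl⟩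
  have hf2 : a f - b f ≤ sSup ((fun f => a f - b f) '' dball V) := le_csSup h2 ⟨f, hf, rfl⟩
  have hg1 : a g + b g ≤ sSup ((fun f => a f + b f) '' dball V) := le_csSup h1 ⟨g, hg, rfl⟩
  have hg2 : a g - b g ≤ sSup ((fun f => a f - b f) '' dball V) := le_csSup h2 ⟨g, hg, rfl⟩
  rcases le_total (b g) (b f) with hle | hle
  · have habs : |b f| - |b g| ≤ b f - b g := by
      have := abs_sub_abs_le_abs_sub (b f) (b g)
      rwa [abs_of_nonneg (sub_nonneg.2 hle)] at this
    linarith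
  · have habs : |b f| - |b g| ≤ b g - b f := by
      have := abs_sub_abs_le_abs_sub (b f) (b g)
      rwa [abs_of_nonpos (sub_nonpos.2 hle), neg_sub] at this
    linarith

lemma sv_abs (b : Bool) : |sv b| = 1 := by cases b <;> simp [sv]

noncomputable def mixSup (C B : Finset (Fin s)) (ε : Fin s → Bool) : ℝ :=
  sSup ((fun f : V →L[ℝ] ℝ =>
    (∑ i ∈ C, sv (ε i) * |f (z i)|) + ∑ i ∈ B, sv (ε i) * f (z i)) '' dball V)

noncomputable def mixed (C B : Finset (Fin s)) : ℝ := ∑ ε : Fin s → Bool, mixSup z C B ε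

lemma abs_sum_le_gen (C : Finset (Fin s)) (u v : Fin s → ℝ) (hu : ∀ i, |u i| = 1)
    (hv : ∀ i, |v i| ≤ ‖z i‖) :
    |∑ i ∈ C, u i * v i| ≤ ∑ i, ‖z i‖ := by
  calc |∑ i ∈ C, u i * v i| ≤ ∑ i ∈ C, |u i * v i| := Finset.abs_sum_le_sum_abs _ _
    _ ≤ ∑ i ∈ C, ‖z i‖ := by
        refine Finset.sum_le_sum fun i _ => ?_
        rw [abs_mul, hu i, one_mul]
        exact hv i
    _ ≤ ∑ i, ‖z i‖ :=
        Finset.sum_le_sum_of_subset_of_nonneg (Finset.subset_univ C)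
          (fun i _ _ => norm_nonneg _)

def flipAt (j : Fin s) (ε : Fin s → Bool) : Fin s → Bool := Function.update ε j (!(ε j))

lemma flipAt_inv (j : Fin s) : Function.Involutive (flipAt (s := s) j) := by
  intro ε; funext i
  by_cases h : i = j
  · subst h; simp [flipAt]
  · simp [flipAt, Function.update_of_ne h]

lemma contr_step {C B : Finset (Fin s)} {j : Fin s} (hjC : j ∉ C) (hjB : j ∉ B) :
    mixed z (insert j C) B ≤ mixed z C (insert j B) := by
  have key : ∀ ε : Fin s → Bool,
      mixSup z (insert j C) B ε + mixSup z (insert j C) B (flipAt j ε)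
        ≤ mixSup z C (insert j B) ε + mixSup z C (insert j B) (flipAt j ε) := by
    intro ε
    set a : (V →L[ℝ] ℝ) → ℝ := fun f =>
      (∑ i ∈ C, sv (ε i) * |f (z i)|) + ∑ i ∈ B, sv (ε i) * f (z i) with ha
    set b : (V →L[ℝ] ℝ) → ℝ := fun f => f (z j) with hb
    have hCflip : ∀ f : V →L[ℝ] ℝ,
        ∑ i ∈ C, sv (flipAt j ε i) * |f (z i)| = ∑ i ∈ C, sv (ε i) * |f (z i)| :=
      fun f => Finset.sum_congr rfl fun i hi => by
        rw [flipAt, Function.update_of_ne (ne_of_mem_of_not_mem hi hjC)]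
    have hBflip : ∀ f : V →L[ℝ] ℝ,
        ∑ i ∈ B, sv (flipAt j ε i) * f (z i) = ∑ i ∈ B, sv (ε i) * f (z i) :=
      fun f => Finset.sum_congr rfl fun i hi => by
        rw [flipAt, Function.update_of_ne (ne_of_mem_of_not_mem hi hjB)]
    have hflipj : flipAt j ε j = !(ε j) := Function.update_self _ _ _
    have hΛ : ∀ f ∈ dball V, |a f| + |b f| ≤ 2 * (∑ i, ‖z i‖) + ‖z j‖ := by
      intro f hf
      have h1 := abs_sum_le_gen z C (fun i => sv (ε i)) (fun i => |f (z i)|)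
        (fun i => sv_abs _) (fun i => by rw [abs_abs]; exact abs_apply_le hf _)
      have h2 := abs_sum_le_gen z B (fun i => sv (ε i)) (fun i => f (z i))
        (fun i => sv_abs _) (fun i => abs_apply_le hf _)
      have h3 : |a f| ≤ (∑ i, ‖z i‖) + ∑ i, ‖z i‖ := by
        rw [ha]
        exact le_trans (abs_add_le _ _) (add_le_add h1 h2)
      have h4 : |b f| ≤ ‖z j‖ := abs_apply_le hf _
      linarith
    cases hε : ε j with
    | true =>
      have svt : sv (ε j) = 1 := by rw [hε]; rfl
      have svf : sv (flipAt j ε j) = -1 := by rw [hflipj, hε]; rfl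
      have E1 : (fun f : V →L[ℝ] ℝ =>
          (∑ i ∈ insert j C, sv (ε i) * |f (z i)|) + ∑ i ∈ B, sv (ε i) * f (z i))
          = fun f => a f + |b f| := by
        funext f
        rw [Finset.sum_insert hjC, svt, ha, hb]
        ring
      have E2 : (fun f : V →L[ℝ] ℝ =>
          (∑ i ∈ insert j C, sv (flipAt j ε i) * |f (z i)|)
            + ∑ i ∈ B, sv (flipAt j ε i) * f (z i))
          = fun f => a f - |b f| := by
        funext f
        rw [Finset.sum_insert hjC, svf, hCflip f, hBflip f, ha, hb]
        ring
      have E3 : (fun f : V →L[ℝ] ℝ =>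
          (∑ i ∈ C, sv (ε i) * |f (z i)|) + ∑ i ∈ insert j B, sv (ε i) * f (z i))
          = fun f => a f + b f := by
        funext f
        rw [Finset.sum_insert hjB, svt, ha, hb]
        ring
      have E4 : (fun f : V →L[ℝ] ℝ =>
          (∑ i ∈ C, sv (flipAt j ε i) * |f (z i)|)
            + ∑ i ∈ insert j B, sv (flipAt j ε i) * f (z i))
          = fun f => a f - b f := by
        funext f
        rw [Finset.sum_insert hjB, svf, hCflip f, hBflip f, ha, hb]
        ring
      rw [mixSup, mixSup, mixSup, mixSup, E1, E2, E3, E4]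
      exact two_point a b _ hΛ
    | false =>
      have svt : sv (ε j) = -1 := by rw [hε]; rfl
      have svf : sv (flipAt j ε j) = 1 := by rw [hflipj, hε]; rfl
      have E1 : (fun f : V →L[ℝ] ℝ =>
          (∑ i ∈ insert j C, sv (ε i) * |f (z i)|) + ∑ i ∈ B, sv (ε i) * f (z i))
          = fun f => a f - |b f| := by
        funext f
        rw [Finset.sum_insert hjC, svt, ha, hb]
        ring
      have E2 : (fun f : V →L[ℝ] ℝ =>
          (∑ i ∈ insert j C, sv (flipAt j ε i) * |f (z i)|)
            + ∑ i ∈ B, sv (flipAt j ε i) * f (z i))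
          = fun f => a f + |b f| := by
        funext f
        rw [Finset.sum_insert hjC, svf, hCflip f, hBflip f, ha, hb]
        ring
      have E3 : (fun f : V →L[ℝ] ℝ =>
          (∑ i ∈ C, sv (ε i) * |f (z i)|) + ∑ i ∈ insert j B, sv (ε i) * f (z i))
          = fun f => a f - b f := by
        funext f
        rw [Finset.sum_insert hjB, svt, ha, hb]
        ring
      have E4 : (fun f : V →L[ℝ] ℝ =>
          (∑ i ∈ C, sv (flipAt j ε i) * |f (z i)|)
            + ∑ i ∈ insert j B, sv (flipAt j ε i) * f (z i))
          = fun f => a f + b f := by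
        funext f
        rw [Finset.sum_insert hjB, svf, hCflip f, hBflip f, ha, hb]
        ring
      rw [mixSup, mixSup, mixSup, mixSup, E1, E2, E3, E4]
      linarith [two_point a b _ hΛ]
  have hreindex : ∀ (G : (Fin s → Bool) → ℝ),
      ∑ ε : Fin s → Bool, G (flipAt j ε) = ∑ ε : Fin s → Bool, G ε := fun G =>
    Fintype.sum_equiv (flipAt_inv (s := s) j).toPerm _ _ (fun ε => rfl)
  have h2 : 2 * mixed z (insert j C) B ≤ 2 * mixed z C (insert j B) := by
    calc 2 * mixed z (insert j C) B
        = ∑ ε : Fin s → Bool,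
            (mixSup z (insert j C) B ε + mixSup z (insert j C) B (flipAt j ε)) := by
          rw [Finset.sum_add_distrib, hreindex, mixed, two_mul]
      _ ≤ ∑ ε : Fin s → Bool,
            (mixSup z C (insert j B) ε + mixSup z C (insert j B) (flipAt j ε)) :=
          Finset.sum_le_sum fun ε _ => key ε
      _ = 2 * mixed z C (insert j B) := by
          rw [Finset.sum_add_distrib, hreindex, mixed, two_mul]
  linarith

lemma contr_all (C : Finset (Fin s)) :
    ∀ B, Disjoint C B → mixed z C B ≤ mixed z ∅ (C ∪ B) := by
  induction C using Finset.induction_on with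
  | empty => intro B _; rw [Finset.empty_union]
  | @insert j C hjC IH =>
    intro B hdisj
    rw [Finset.disjoint_insert_left] at hdisj
    obtain ⟨hjB, hCB⟩ := hdisj
    have hCB' : Disjoint C (insert j B) := by
      rw [Finset.disjoint_insert_right]
      exact ⟨hjC, hCB⟩
    calc mixed z (insert j C) B ≤ mixed z C (insert j B) := contr_step z hjC hjB
      _ ≤ mixed z ∅ (C ∪ insert j B) := IH _ hCB'
      _ = mixed z ∅ (insert j C ∪ B) := by rw [Finset.union_insert, Finset.insert_union]

lemma mixSup_empty_le (B : Finset (Fin s)) (ε : Fin s → Bool) :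
    mixSup z ∅ B ε ≤ ‖∑ i ∈ B, sv (ε i) • z i‖ := by
  refine csSup_le (dball_nonempty.image _) ?_
  rintro x ⟨f, hf, rfl⟩
  have hfx : (∑ i ∈ (∅ : Finset (Fin s)), sv (ε i) * |f (z i)|)
      + ∑ i ∈ B, sv (ε i) * f (z i) = f (∑ i ∈ B, sv (ε i) • z i) := by
    rw [Finset.sum_empty, zero_add, map_sum]
    exact Finset.sum_congr rfl fun i _ => by rw [f.map_smul, smul_eq_mul]
  beta_reduce
  rw [hfx]
  exact le_trans (le_abs_self _) (abs_apply_le hf _)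

lemma mixed_le_Msum (B : Finset (Fin s)) :
    mixed z B ∅ ≤ ∑ ε : Fin s → Bool, ‖Sv z ε‖ := by
  calc mixed z B ∅ ≤ mixed z ∅ (B ∪ ∅) := contr_all z B ∅ (Finset.disjoint_empty_right _)
    _ = mixed z ∅ B := by rw [Finset.union_empty]
    _ ≤ ∑ ε : Fin s → Bool, ‖∑ i ∈ B, sv (ε i) • z i‖ :=
        Finset.sum_le_sum fun ε _ => mixSup_empty_le z B ε
    _ ≤ ∑ ε : Fin s → Bool, ‖Sv z ε‖ := pairing z B

lemma T_ind_eq_mixSup (B : Finset (Fin s)) (ε : Fin s → Bool) :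
    T z (fun i => sv (ε i) * if i ∈ B then 1 else 0) = mixSup z B ∅ ε := by
  rw [T, mixSup]
  congr 1
  apply Set.image_congr
  intro f _
  rw [Finset.sum_empty, add_zero]
  rw [show (∑ i, (sv (ε i) * if i ∈ B then 1 else 0) * |f (z i)|)
      = ∑ i, (if i ∈ B then sv (ε i) * |f (z i)| else 0) from
    Finset.sum_congr rfl fun i _ => by by_cases h : i ∈ B <;> simp [h]]
  rw [Finset.sum_ite_mem, Finset.univ_inter]

lemma cube_sign_abs_le (d : Fin s → ℝ) (hd : ∀ i, d i = 1 ∨ d i = -1 ∨ d i = 0) :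
    ∑ ε : Fin s → Bool, T z (fun i => sv (ε i) * d i)
      ≤ ∑ ε : Fin s → Bool, ‖Sv z ε‖ := by
  set B : Finset (Fin s) := Finset.univ.filter (fun i => d i ≠ 0) with hB
  set ρ : (Fin s → Bool) → (Fin s → Bool) := fun ε i => if d i < 0 then !(ε i) else ε i with hρ
  have hρinv : Function.Involutive ρ := by
    intro ε; funext i; by_cases h : d i < 0 <;> simp [hρ, h]
  have hfun : ∀ ε : Fin s → Bool,
      (fun i => sv (ε i) * d i) = (fun i => sv (ρ ε i) * if i ∈ B then 1 else 0) := by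
    intro ε; funext i
    rcases hd i with h | h | h
    · have h1 : i ∈ B := by simp [hB, h]
      have h2 : ¬ d i < 0 := by rw [h]; norm_num
      rw [h, if_pos h1, hρ]
      simp [h2]
    · have h1 : i ∈ B := by simp [hB, h]
      have h2 : d i < 0 := by rw [h]; norm_num
      rw [h, if_pos h1, hρ]
      simp only [h2, if_pos]
      rw [sv_not]
      ring
    · have h1 : i ∉ B := by simp [hB, h]
      rw [h, if_neg h1]
      ring
  calc ∑ ε : Fin s → Bool, T z (fun i => sv (ε i) * d i)
      = ∑ ε : Fin s → Bool, T z (fun i => sv (ρ ε i) * if i ∈ B then 1 else 0) :=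
        Finset.sum_congr rfl fun ε _ => by rw [hfun ε]
    _ = ∑ ε : Fin s → Bool, T z (fun i => sv (ε i) * if i ∈ B then 1 else 0) :=
        Fintype.sum_equiv hρinv.toPerm _ _ (fun ε => rfl)
    _ = ∑ ε : Fin s → Bool, mixSup z B ∅ ε :=
        Finset.sum_congr rfl fun ε _ => T_ind_eq_mixSup z B ε
    _ = mixed z B ∅ := rfl
    _ ≤ ∑ ε : Fin s → Bool, ‖Sv z ε‖ := mixed_le_Msum z B

def W (p : ℝ) (δ : Fin s → Bool) : ℝ := ∏ i, (if δ i then p else 1 - p)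

def indR (b : Bool) : ℝ := if b then 1 else 0

noncomputable def cardR (δ : Fin s → Bool) : ℝ := ∑ i, indR (δ i)

lemma sum_cube_prod (g : Fin s → Bool → ℝ) :
    ∑ δ : Fin s → Bool, ∏ i, g i (δ i) = ∏ i, (g i true + g i false) := by
  have h := Finset.prod_univ_sum (fun _ : Fin s => (Finset.univ : Finset Bool)) g
  rw [Fintype.piFinset_univ] at h
  rw [← h]
  exact Finset.prod_congr rfl fun i _ => by rw [Fintype.sum_bool]

lemma W_nonneg {p : ℝ} (hp0 : 0 ≤ p) (hp1 : p ≤ 1) (δ : Fin s → Bool) : 0 ≤ W p δ :=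
  Finset.prod_nonneg fun i _ => by by_cases h : δ i <;> simp [h] <;> linarith

lemma W_moment (p : ℝ) (A : Finset (Fin s)) :
    ∑ δ : Fin s → Bool, W (s := s) p δ * ∏ k ∈ A, indR (δ k) = p ^ A.card := by
  have hpoint : ∀ δ : Fin s → Bool, W (s := s) p δ * ∏ k ∈ A, indR (δ k)
      = ∏ i, ((if δ i then p else 1 - p) * (if i ∈ A then indR (δ i) else 1)) := by
    intro δ
    rw [Finset.prod_mul_distrib, Finset.prod_ite_mem, Finset.univ_inter, W]
  rw [Finset.sum_congr rfl (fun δ _ => hpoint δ),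
    sum_cube_prod (fun i b => (if b then p else 1 - p) * (if i ∈ A then indR b else 1))]
  have h2 : ∀ i : Fin s,
      ((if (true : Bool) then p else 1 - p) * (if i ∈ A then indR true else 1)
        + (if (false : Bool) then p else 1 - p) * (if i ∈ A then indR false else 1))
      = if i ∈ A then p else 1 := by
    intro i; by_cases h : i ∈ A <;> simp [indR, h]
  rw [Finset.prod_congr rfl (fun i _ => h2 i), Finset.prod_ite_mem, Finset.univ_inter,
    Finset.prod_const]

lemma W_sum (p : ℝ) : ∑ δ : Fin s → Bool, W (s := s) p δ = 1 := by
  have h := W_moment (s := s) p ∅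
  simpa using h

lemma E_ind (p : ℝ) (i : Fin s) :
    ∑ δ : Fin s → Bool, W (s := s) p δ * indR (δ i) = p := by
  have h := W_moment (s := s) p {i}
  simpa using h

lemma E_pair (p : ℝ) {i j : Fin s} (hij : i ≠ j) :
    ∑ δ : Fin s → Bool, W (s := s) p δ * (indR (δ i) * indR (δ j)) = p ^ 2 := by
  have h := W_moment (s := s) p {i, j}
  simp_rw [Finset.prod_pair hij, Finset.card_pair hij] at h
  exact h

lemma E_card (p : ℝ) :
    ∑ δ : Fin s → Bool, W (s := s) p δ * cardR δ = s * p := by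
  have h : ∀ δ : Fin s → Bool, W (s := s) p δ * cardR δ
      = ∑ i, W (s := s) p δ * indR (δ i) := by
    intro δ; rw [cardR, Finset.mul_sum]
  rw [Finset.sum_congr rfl fun δ _ => h δ, Finset.sum_comm,
    Finset.sum_congr rfl fun i (_ : i ∈ Finset.univ) => E_ind (s := s) p i,
    Finset.sum_const, Finset.card_univ, Fintype.card_fin, nsmul_eq_mul]

lemma indR_sq (b : Bool) : indR b * indR b = indR b := by cases b <;> simp [indR]

lemma E_card_sq (p : ℝ) :
    ∑ δ : Fin s → Bool, W (s := s) p δ * (cardR δ * cardR δ)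
      = s * p + ((s : ℝ) ^ 2 - s) * p ^ 2 := by
  have h : ∀ δ : Fin s → Bool, W (s := s) p δ * (cardR δ * cardR δ)
      = ∑ i, ∑ j, W (s := s) p δ * (indR (δ i) * indR (δ j)) := by
    intro δ
    rw [cardR, Finset.sum_mul_sum]
    rw [Finset.mul_sum]
    exact Finset.sum_congr rfl fun i _ => by rw [Finset.mul_sum]
  rw [Finset.sum_congr rfl fun δ _ => h δ]
  rw [Finset.sum_comm]
  have hin : ∀ i : Fin s, (∑ δ : Fin s → Bool, ∑ j, W (s := s) p δ * (indR (δ i) * indR (δ j)))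
      = ∑ j, ∑ δ : Fin s → Bool, W (s := s) p δ * (indR (δ i) * indR (δ j)) :=
    fun i => Finset.sum_comm
  rw [Finset.sum_congr rfl fun i _ => hin i]
  have hval : ∀ i j : Fin s, (∑ δ : Fin s → Bool, W (s := s) p δ * (indR (δ i) * indR (δ j)))
      = if i = j then p else p ^ 2 := by
    intro i j
    by_cases h : i = j
    · subst h
      rw [if_pos rfl,
        Finset.sum_congr rfl fun δ (_ : δ ∈ Finset.univ) => by rw [indR_sq]]
      exact E_ind (s := s) p i
    · rw [if_neg h]; exact E_pair (s := s) p h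
  rw [Finset.sum_congr rfl fun i _ => Finset.sum_congr rfl fun j _ => hval i j]
  have hrow : ∀ i : Fin s, (∑ j, if i = j then p else p ^ 2) = p + ((s:ℝ) - 1) * p ^ 2 := by
    intro i
    have : ∀ j : Fin s, (if i = j then p else p ^ 2)
        = p ^ 2 + (if i = j then p - p ^ 2 else 0) := by
      intro j; by_cases h : i = j <;> simp [h]
    rw [Finset.sum_congr rfl fun j _ => this j, Finset.sum_add_distrib, Finset.sum_const,
      Finset.sum_ite_eq, Finset.card_univ, Fintype.card_fin, nsmul_eq_mul]
    simp
    ring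
  rw [Finset.sum_congr rfl fun i _ => hrow i, Finset.sum_const, Finset.card_univ,
    Fintype.card_fin, nsmul_eq_mul]
  ring



lemma E_var (p : ℝ) :
    ∑ δ : Fin s → Bool, W (s := s) p δ * (cardR δ - s * p) ^ 2 = s * (p - p ^ 2) := by
  have h : ∀ δ : Fin s → Bool, W (s := s) p δ * (cardR δ - s * p) ^ 2
      = W (s := s) p δ * (cardR δ * cardR δ) - (2 * (s * p)) * (W (s := s) p δ * cardR δ)
        + (s * p) ^ 2 * W (s := s) p δ := by
    intro δ; ring
  rw [Finset.sum_congr rfl fun δ _ => h δ, Finset.sum_add_distrib, Finset.sum_sub_distrib,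
    ← Finset.mul_sum, ← Finset.mul_sum, E_card_sq, E_card, W_sum]
  ring

lemma ET_le (p : ℝ) (hp0 : 0 ≤ p) (hp1 : p ≤ 1) (w' : ℝ)
    (hw' : ∀ f ∈ dball V, ∑ i, |f (z i)| ≤ w') :
    ∑ δ : Fin s → Bool, W (s := s) p δ * T z (fun i => indR (δ i))
      ≤ p * w' + (∑ ε : Fin s → Bool, ‖Sv z ε‖) / 2 ^ s := by
  have hWnn : ∀ δ : Fin s → Bool, 0 ≤ W (s := s) p δ := W_nonneg hp0 hp1
  have hconst : T z (fun _ => p) ≤ p * w' := by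
    refine T_le z fun f hf => ?_
    rw [← Finset.mul_sum]
    exact mul_le_mul_of_nonneg_left (hw' f hf) hp0
  have hsub : ∀ δ : Fin s → Bool,
      T z (fun i => indR (δ i)) ≤ T z (fun i => indR (δ i) - p) + p * w' := by
    intro δ
    have h1 : (fun i => indR (δ i)) = fun i => (indR (δ i) - p) + p := by funext i; ring
    calc T z (fun i => indR (δ i)) = T z (fun i => (indR (δ i) - p) + p) := by rw [h1]
      _ ≤ T z (fun i => indR (δ i) - p) + T z (fun _ => p) := T_add_le z _ _
      _ ≤ T z (fun i => indR (δ i) - p) + p * w' := by linarith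
  have hsym : ∀ δ : Fin s → Bool, T z (fun i => indR (δ i) - p)
      ≤ ∑ δ' : Fin s → Bool, W (s := s) p δ' * T z (fun i => indR (δ i) - indR (δ' i)) := by
    intro δ
    refine T_le z fun f hf => ?_
    have hswap : (∑ δ' : Fin s → Bool, W (s := s) p δ'
          * ∑ i, (indR (δ i) - indR (δ' i)) * |f (z i)|)
        = ∑ i, (∑ δ' : Fin s → Bool, W (s := s) p δ' * (indR (δ i) - indR (δ' i)))
            * |f (z i)| := by
      simp only [Finset.mul_sum, Finset.sum_mul]
      rw [Finset.sum_comm]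
      exact Finset.sum_congr rfl fun i _ => Finset.sum_congr rfl fun δ' _ => by ring
    have heq : ∑ i, (indR (δ i) - p) * |f (z i)|
        = ∑ δ' : Fin s → Bool, W (s := s) p δ'
            * ∑ i, (indR (δ i) - indR (δ' i)) * |f (z i)| := by
      rw [hswap]
      refine Finset.sum_congr rfl fun i _ => ?_
      congr 1
      have h2 : ∑ δ' : Fin s → Bool, W (s := s) p δ' * (indR (δ i) - indR (δ' i))
          = (∑ δ' : Fin s → Bool, W (s := s) p δ') * indR (δ i)
            - ∑ δ' : Fin s → Bool, W (s := s) p δ' * indR (δ' i) := by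
        rw [Finset.sum_mul, ← Finset.sum_sub_distrib]
        exact Finset.sum_congr rfl fun δ' _ => by ring
      rw [h2, W_sum, E_ind, one_mul]
    rw [heq]
    exact Finset.sum_le_sum fun δ' _ =>
      mul_le_mul_of_nonneg_left (le_T z hf) (hWnn δ')
  -- the double sum bound
  set Msum := ∑ ε : Fin s → Bool, ‖Sv z ε‖ with hMsum
  have hdouble : (∑ δ : Fin s → Bool, W (s := s) p δ
        * ∑ δ' : Fin s → Bool, W (s := s) p δ' * T z (fun i => indR (δ i) - indR (δ' i)))
      ≤ Msum / 2 ^ s := by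
    set F : (Fin s → Bool) × (Fin s → Bool) → ℝ := fun x =>
      W (s := s) p x.1 * (W (s := s) p x.2
        * T z (fun i => indR (x.1 i) - indR (x.2 i))) with hF
    have hDS : (∑ δ : Fin s → Bool, W (s := s) p δ
          * ∑ δ' : Fin s → Bool, W (s := s) p δ' * T z (fun i => indR (δ i) - indR (δ' i)))
        = ∑ x : (Fin s → Bool) × (Fin s → Bool), F x := by
      rw [show (∑ δ : Fin s → Bool, W (s := s) p δ
          * ∑ δ' : Fin s → Bool, W (s := s) p δ' * T z (fun i => indR (δ i) - indR (δ' i)))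
          = ∑ δ : Fin s → Bool, ∑ δ' : Fin s → Bool, F (δ, δ') from
        Finset.sum_congr rfl fun δ _ => Finset.mul_sum _ _ _]
      exact (Fintype.sum_prod_type' (f := fun δ δ' => F (δ, δ'))).symm
    have hswapinv : ∀ ε : Fin s → Bool,
        (∑ x : (Fin s → Bool) × (Fin s → Bool), F x)
          = ∑ x : (Fin s → Bool) × (Fin s → Bool),
              W (s := s) p x.1 * (W (s := s) p x.2
                * T z (fun i => sv (ε i) * (indR (x.1 i) - indR (x.2 i)))) := by
      intro ε
      set σ : (Fin s → Bool) × (Fin s → Bool) → (Fin s → Bool) × (Fin s → Bool) :=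
        fun x => (fun i => if ε i then x.1 i else x.2 i,
                  fun i => if ε i then x.2 i else x.1 i) with hσ
      have hσinv : Function.Involutive σ := by
        intro x
        refine Prod.ext (funext fun i => ?_) (funext fun i => ?_) <;>
          by_cases h : ε i <;> simp [hσ, h]
      refine Fintype.sum_equiv hσinv.toPerm F _ fun x => ?_
      simp only [Function.Involutive.coe_toPerm]
      have hd2 : (fun i => sv (ε i) * (indR ((σ x).1 i) - indR ((σ x).2 i)))
          = fun i => indR (x.1 i) - indR (x.2 i) := by
        funext i
        by_cases h : ε i <;> simp [hσ, h, sv] <;> ring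
      have hW1 : W (s := s) p ((σ x).1) * W (s := s) p ((σ x).2)
          = W (s := s) p x.1 * W (s := s) p x.2 := by
        simp only [W, ← Finset.prod_mul_distrib]
        refine Finset.prod_congr rfl fun i _ => ?_
        by_cases h : ε i
        · simp [hσ, h]
        · simp [hσ, h, mul_comm]
      calc F x = (W (s := s) p x.1 * W (s := s) p x.2)
            * T z (fun i => indR (x.1 i) - indR (x.2 i)) := by rw [hF]; ring
        _ = (W (s := s) p ((σ x).1) * W (s := s) p ((σ x).2))
            * T z (fun i => sv (ε i) * (indR ((σ x).1 i) - indR ((σ x).2 i))) := by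
              rw [hW1, hd2]
        _ = W (s := s) p ((σ x).1) * (W (s := s) p ((σ x).2)
            * T z (fun i => sv (ε i) * (indR ((σ x).1 i) - indR ((σ x).2 i)))) := by ring
    have hWW : ∑ x : (Fin s → Bool) × (Fin s → Bool),
        W (s := s) p x.1 * W (s := s) p x.2 = 1 := by
      rw [Fintype.sum_prod_type' (f := fun δ δ' => W (s := s) p δ * W (s := s) p δ')]
      rw [Finset.sum_congr rfl fun (δ : Fin s → Bool) (_ : δ ∈ Finset.univ) =>
        (Finset.mul_sum Finset.univ (fun δ' : Fin s → Bool => W (s := s) p δ')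
          (W (s := s) p δ)).symm]
      rw [W_sum, ← Finset.sum_mul, W_sum, one_mul]
    have hcard : (Fintype.card (Fin s → Bool) : ℝ) = 2 ^ s := by
      rw [Fintype.card_fun]
      simp
    have h2s : (0:ℝ) < 2 ^ s := by positivity
    have hkey : (∑ x : (Fin s → Bool) × (Fin s → Bool), F x) * 2 ^ s ≤ Msum := by
      have h1 : (∑ x : (Fin s → Bool) × (Fin s → Bool), F x) * 2 ^ s
          = ∑ ε : Fin s → Bool, (∑ x : (Fin s → Bool) × (Fin s → Bool), F x) := by
        rw [Finset.sum_const, Finset.card_univ, nsmul_eq_mul, hcard]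
        ring
      rw [h1, Finset.sum_congr rfl fun ε _ => hswapinv ε, Finset.sum_comm]
      calc ∑ x : (Fin s → Bool) × (Fin s → Bool), ∑ ε : Fin s → Bool,
              W (s := s) p x.1 * (W (s := s) p x.2
                * T z (fun i => sv (ε i) * (indR (x.1 i) - indR (x.2 i))))
          ≤ ∑ x : (Fin s → Bool) × (Fin s → Bool),
              W (s := s) p x.1 * W (s := s) p x.2 * Msum := by
            refine Finset.sum_le_sum fun x _ => ?_
            have hsum2 : (∑ ε : Fin s → Bool,
                W (s := s) p x.1 * (W (s := s) p x.2
                  * T z (fun i => sv (ε i) * (indR (x.1 i) - indR (x.2 i)))))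
                = W (s := s) p x.1 * W (s := s) p x.2
                  * ∑ ε : Fin s → Bool,
                      T z (fun i => sv (ε i) * (indR (x.1 i) - indR (x.2 i))) := by
              rw [Finset.mul_sum]
              exact Finset.sum_congr rfl fun ε _ => by ring
            rw [hsum2]
            refine mul_le_mul_of_nonneg_left ?_ (mul_nonneg (hWnn _) (hWnn _))
            refine cube_sign_abs_le z _ fun i => ?_
            rcases Bool.eq_false_or_eq_true (x.1 i) with h1 | h1 <;>
              rcases Bool.eq_false_or_eq_true (x.2 i) with h2 | h2 <;>
                simp [h1, h2, indR]
          _ = Msum := by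
            rw [← Finset.sum_mul, hWW, one_mul]
    rw [hDS]
    exact (le_div_iff₀ h2s).mpr hkey
  calc ∑ δ : Fin s → Bool, W (s := s) p δ * T z (fun i => indR (δ i))
      ≤ ∑ δ : Fin s → Bool, W (s := s) p δ
          * ((∑ δ' : Fin s → Bool, W (s := s) p δ'
              * T z (fun i => indR (δ i) - indR (δ' i))) + p * w') := by
        refine Finset.sum_le_sum fun δ _ => ?_
        refine mul_le_mul_of_nonneg_left ?_ (hWnn δ)
        exact le_trans (hsub δ) (by linarith [hsym δ])
    _ = (∑ δ : Fin s → Bool, W (s := s) p δ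
          * ∑ δ' : Fin s → Bool, W (s := s) p δ' * T z (fun i => indR (δ i) - indR (δ' i)))
        + p * w' := by
        simp only [mul_add]
        rw [Finset.sum_add_distrib, ← Finset.sum_mul, W_sum, one_mul]
    _ ≤ Msum / 2 ^ s + p * w' := by linarith
    _ = p * w' + Msum / 2 ^ s := by ring

lemma norm_sum_le_T (τ : Finset (Fin s)) (t : Fin s → ℝ) (mx : ℝ) (hmx0 : 0 ≤ mx)
    (hmx : ∀ i ∈ τ, |t i| ≤ mx) :
    ‖∑ i ∈ τ, t i • z i‖ ≤ mx * T z (fun i => if i ∈ τ then 1 else 0) := by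
  by_cases hzero : (∑ i ∈ τ, t i • z i) = 0
  · rw [hzero, norm_zero]
    exact mul_nonneg hmx0 (T_nonneg z _)
  · obtain ⟨g, hg1, hgx⟩ := exists_dual_vector ℝ _ (norm_ne_zero_iff.mpr hzero)
    have hgd : g ∈ dball V := le_of_eq hg1
    have h1 : ‖∑ i ∈ τ, t i • z i‖ = g (∑ i ∈ τ, t i • z i) := by
      rw [hgx]; norm_num
    calc ‖∑ i ∈ τ, t i • z i‖ = g (∑ i ∈ τ, t i • z i) := h1
      _ = ∑ i ∈ τ, t i * g (z i) := by
          rw [map_sum]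
          exact Finset.sum_congr rfl fun i _ => by rw [g.map_smul, smul_eq_mul]
      _ ≤ ∑ i ∈ τ, mx * |g (z i)| := by
          refine Finset.sum_le_sum fun i hi => ?_
          calc t i * g (z i) ≤ |t i * g (z i)| := le_abs_self _
            _ = |t i| * |g (z i)| := abs_mul _ _
            _ ≤ mx * |g (z i)| := mul_le_mul_of_nonneg_right (hmx i hi) (abs_nonneg _)
      _ = mx * ∑ i ∈ τ, |g (z i)| := by rw [Finset.mul_sum]
      _ ≤ mx * T z (fun i => if i ∈ τ then 1 else 0) := by
          refine mul_le_mul_of_nonneg_left ?_ hmx0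
          have h2 : ∑ i ∈ τ, |g (z i)| = ∑ i, (if i ∈ τ then (1:ℝ) else 0) * |g (z i)| := by
            rw [show (∑ i, (if i ∈ τ then (1:ℝ) else 0) * |g (z i)|)
                = ∑ i, (if i ∈ τ then |g (z i)| else 0) from
              Finset.sum_congr rfl fun i _ => by by_cases h : i ∈ τ <;> simp [h]]
            rw [Finset.sum_ite_mem, Finset.univ_inter]
          rw [h2]
          exact le_T z hgd

lemma cheb (p : ℝ) (hp0 : 0 ≤ p) (hp1 : p ≤ 1) (hsp : 0 ≤ (s : ℝ) * p) :
    (∑ δ ∈ Finset.univ.filter (fun δ : Fin s → Bool => cardR δ < (s * p) / 4),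
      W (s := s) p δ) * (3 * (s * p) / 4) ^ 2
    ≤ ∑ δ : Fin s → Bool, W (s := s) p δ * (cardR δ - s * p) ^ 2 := by
  rw [Finset.sum_mul]
  calc ∑ δ ∈ Finset.univ.filter (fun δ : Fin s → Bool => cardR δ < (s * p) / 4),
        W (s := s) p δ * (3 * (s * p) / 4) ^ 2
      ≤ ∑ δ ∈ Finset.univ.filter (fun δ : Fin s → Bool => cardR δ < (s * p) / 4),
        W (s := s) p δ * (cardR δ - s * p) ^ 2 := by
        refine Finset.sum_le_sum fun δ hδ => ?_
        have hδ' : cardR δ < (s * p) / 4 := (Finset.mem_filter.mp hδ).2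
        refine mul_le_mul_of_nonneg_left ?_ (W_nonneg hp0 hp1 δ)
        have h1 : 3 * ((s:ℝ) * p) / 4 ≤ (s:ℝ) * p - cardR δ := by linarith
        have h2 : (0:ℝ) ≤ 3 * ((s:ℝ) * p) / 4 := by linarith
        calc (3 * ((s:ℝ) * p) / 4) ^ 2 ≤ ((s:ℝ) * p - cardR δ) ^ 2 :=
              pow_le_pow_left₀ h2 h1 2
          _ = (cardR δ - (s:ℝ) * p) ^ 2 := by ring
    _ ≤ ∑ δ : Fin s → Bool, W (s := s) p δ * (cardR δ - s * p) ^ 2 := by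
        refine Finset.sum_le_sum_of_subset_of_nonneg (Finset.filter_subset _ _)
          fun δ _ _ => mul_nonneg (W_nonneg hp0 hp1 δ) (sq_nonneg _)

end Stmt5Aux

set_option maxHeartbeats 1000000
open Stmt5Aux


/-- Talagrand's upper `ℓ∞` extraction: with `M₁` the Rademacher average and `w` the maximum
of `‖∑ εᵢ zᵢ‖` over signs, there is a subset `τ` of cardinality at least `s·M₁/(2w)` on which
all linear combinations satisfy `‖∑_{i∈τ} tᵢ zᵢ‖ ≤ 4 M₁ max_{i∈τ}|tᵢ|`. -/
theorem stmt_5 {V : Type*} [NormedAddCommGroup V] [NormedSpace ℝ V]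
    (s : ℕ) (z : Fin s → V) (M₁ w : ℝ)
    (hM₁ : M₁ = (∑ ε : Fin s → Bool, ‖∑ i, (if ε i then (1 : ℝ) else -1) • z i‖) / 2 ^ s)
    (hw : w = ⨆ ε : Fin s → Bool, ‖∑ i, (if ε i then (1 : ℝ) else -1) • z i‖) :
    ∃ τ : Finset (Fin s),
      (s : ℝ) * M₁ / (2 * w) ≤ (τ.card : ℝ) ∧
      ∀ t : Fin s → ℝ, ‖∑ i ∈ τ, t i • z i‖ ≤ 4 * M₁ * ⨆ i ∈ τ, |t i| := by
  classical
  have hM₁' : M₁ = (∑ ε : Fin s → Bool, ‖Sv z ε‖) / 2 ^ s := hM₁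
  have hw' : w = ⨆ ε : Fin s → Bool, ‖Sv z ε‖ := hw
  have h2s : (0:ℝ) < 2 ^ s := by positivity
  have hcard2 : ((Finset.univ : Finset (Fin s → Bool)).card : ℝ) = 2 ^ s := by
    rw [Finset.card_univ, Fintype.card_fun]
    simp
  have hbddS : BddAbove (Set.range fun ε : Fin s → Bool => ‖Sv z ε‖) :=
    Finite.bddAbove_range _
  have hSvle : ∀ ε : Fin s → Bool, ‖Sv z ε‖ ≤ w := fun ε => hw' ▸ le_ciSup hbddS ε
  have hw0 : 0 ≤ w := le_trans (norm_nonneg _) (hSvle fun _ => true)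
  have hM₁0 : 0 ≤ M₁ := by
    rw [hM₁']
    have : (0:ℝ) ≤ ∑ ε : Fin s → Bool, ‖Sv z ε‖ :=
      Finset.sum_nonneg fun ε _ => norm_nonneg _
    positivity
  have hMw : M₁ ≤ w := by
    rw [hM₁', div_le_iff₀ h2s]
    calc ∑ ε : Fin s → Bool, ‖Sv z ε‖ ≤ ∑ _ε : Fin s → Bool, w :=
          Finset.sum_le_sum fun ε _ => hSvle ε
      _ = w * 2 ^ s := by rw [Finset.sum_const, nsmul_eq_mul, hcard2]; ring
  have hzM : ∀ i, ‖z i‖ ≤ M₁ := by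
    intro i
    have hp := pairing z {i}
    have heq : ∀ ε : Fin s → Bool, ‖∑ j ∈ ({i} : Finset (Fin s)), sv (ε j) • z j‖ = ‖z i‖ := by
      intro ε
      rw [Finset.sum_singleton, norm_smul,
        show ‖sv (ε i)‖ = 1 from by rw [Real.norm_eq_abs, sv_abs], one_mul]
    rw [Finset.sum_congr rfl fun ε _ => heq ε, Finset.sum_const, nsmul_eq_mul, hcard2] at hp
    rw [hM₁', le_div_iff₀ h2s]
    linarith
  have hfw : ∀ f ∈ dball V, ∑ i, |f (z i)| ≤ w := by
    intro f hf
    have h1 : ∑ i, |f (z i)| = f (Sv z (fun i => decide (0 ≤ f (z i)))) := by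
      rw [Sv, map_sum]
      refine Finset.sum_congr rfl fun i _ => ?_
      rw [f.map_smul, smul_eq_mul]
      by_cases h : 0 ≤ f (z i)
      · rw [abs_of_nonneg h]
        simp [sv, h]
      · rw [abs_of_neg (lt_of_not_ge h)]
        simp [sv, h]
    rw [h1]
    exact le_trans (le_trans (le_abs_self _) (abs_apply_le hf _)) (hSvle _)
  have hmxfacts : ∀ (τ : Finset (Fin s)) (t : Fin s → ℝ),
      (0 ≤ ⨆ i ∈ τ, |t i|) ∧ ∀ i ∈ τ, |t i| ≤ ⨆ i ∈ τ, |t i| := by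
    intro τ t
    have hbdd : BddAbove (Set.range fun i => ⨆ _ : i ∈ τ, |t i|) :=
      Finite.bddAbove_range _
    refine ⟨Real.iSup_nonneg fun i => Real.iSup_nonneg fun _ => abs_nonneg _, fun i hi => ?_⟩
    exact le_trans
      (le_of_eq (ciSup_pos (f := fun _ : i ∈ τ => |t i|) hi).symm) (le_ciSup hbdd i)
  rcases le_or_gt w 0 with hwneg | hwpos
  · -- degenerate case : w = 0
    have hM0 : M₁ = 0 := le_antisymm (le_trans hMw hwneg) hM₁0
    refine ⟨∅, ?_, ?_⟩
    · rw [hM0]; simp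
    · intro t; rw [hM0]; simp
  · rcases le_or_gt ((s : ℝ) * M₁ / (2 * w)) 4 with hr4 | hr4
    · -- small case
      have hrs : (s : ℝ) * M₁ / (2 * w) ≤ (s : ℝ) := by
        rw [div_le_iff₀ (by linarith : (0:ℝ) < 2 * w)]
        nlinarith [mul_le_mul_of_nonneg_left hMw (Nat.cast_nonneg (α := ℝ) s)]
      set n : ℕ := ⌈(s : ℝ) * M₁ / (2 * w)⌉₊ with hn
      have hn4 : n ≤ 4 := Nat.ceil_le.mpr (by exact_mod_cast hr4)
      have hns : n ≤ s := Nat.ceil_le.mpr (by exact_mod_cast hrs)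
      obtain ⟨τ, _, hτcard⟩ := Finset.exists_subset_card_eq (s := (Finset.univ : Finset (Fin s))) (n := n)
        (by rw [Finset.card_univ, Fintype.card_fin]; exact hns)
      refine ⟨τ, ?_, ?_⟩
      · rw [hτcard]
        exact Nat.le_ceil _
      · intro t
        obtain ⟨hmx0, hmx⟩ := hmxfacts τ t
        calc ‖∑ i ∈ τ, t i • z i‖ ≤ ∑ i ∈ τ, ‖t i • z i‖ := norm_sum_le _ _
          _ = ∑ i ∈ τ, |t i| * ‖z i‖ :=
              Finset.sum_congr rfl fun i _ => by rw [norm_smul, Real.norm_eq_abs]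
          _ ≤ ∑ _i ∈ τ, (⨆ i ∈ τ, |t i|) * M₁ :=
              Finset.sum_le_sum fun i hi =>
                mul_le_mul (hmx i hi) (hzM i) (norm_nonneg _) hmx0
          _ = (τ.card : ℝ) * ((⨆ i ∈ τ, |t i|) * M₁) := by
              rw [Finset.sum_const, nsmul_eq_mul]
          _ ≤ 4 * ((⨆ i ∈ τ, |t i|) * M₁) := by
              refine mul_le_mul_of_nonneg_right ?_ (mul_nonneg hmx0 hM₁0)
              rw [hτcard]; exact_mod_cast hn4
          _ = 4 * M₁ * ⨆ i ∈ τ, |t i| := by ring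
    · rcases le_or_gt w (4 * M₁) with hw4 | hw4
      · -- τ = univ
        have hrs : (s : ℝ) * M₁ / (2 * w) ≤ (s : ℝ) := by
          rw [div_le_iff₀ (by linarith : (0:ℝ) < 2 * w)]
          nlinarith [mul_le_mul_of_nonneg_left hMw (Nat.cast_nonneg (α := ℝ) s)]
        refine ⟨Finset.univ, ?_, ?_⟩
        · rw [Finset.card_univ, Fintype.card_fin]; exact hrs
        · intro t
          obtain ⟨hmx0, hmx⟩ := hmxfacts Finset.univ t
          have hTu : T z (fun i => if i ∈ (Finset.univ : Finset (Fin s)) then (1:ℝ) else 0)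
              ≤ w := by
            refine T_le z fun f hf => ?_
            calc ∑ i, (if i ∈ (Finset.univ : Finset (Fin s)) then (1:ℝ) else 0) * |f (z i)|
                = ∑ i, |f (z i)| := Finset.sum_congr rfl fun i _ => by simp
              _ ≤ w := hfw f hf
          calc ‖∑ i ∈ Finset.univ, t i • z i‖
              ≤ (⨆ i ∈ Finset.univ, |t i|) * T z
                  (fun i => if i ∈ (Finset.univ : Finset (Fin s)) then (1:ℝ) else 0) :=
                norm_sum_le_T z Finset.univ t _ hmx0 hmx
            _ ≤ (⨆ i ∈ Finset.univ, |t i|) * (4 * M₁) :=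
                mul_le_mul_of_nonneg_left (le_trans hTu hw4) hmx0
            _ = 4 * M₁ * ⨆ i ∈ (Finset.univ : Finset (Fin s)), |t i| := by ring
      · -- probabilistic case
        have hM₁pos : 0 < M₁ := by
          rcases lt_or_eq_of_le hM₁0 with h | h
          · exact h
          · exfalso
            rw [← h] at hr4
            simp at hr4
            linarith
        set p := 2 * M₁ / w with hp
        have hp0 : 0 < p := div_pos (by linarith) hwpos
        have hp1 : p ≤ 1 := by rw [hp, div_le_one hwpos]; linarith
        have hsp : (s:ℝ) * p = 4 * ((s : ℝ) * M₁ / (2 * w)) := by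
          rw [hp]; field_simp; ring
        have hsp16 : 16 < (s:ℝ) * p := by rw [hsp]; linarith
        have hr_eq : (s:ℝ) * p / 4 = (s : ℝ) * M₁ / (2 * w) := by rw [hsp]; ring
        have hET : ∑ δ : Fin s → Bool, W (s := s) p δ * T z (fun i => indR (δ i))
            ≤ 3 * M₁ := by
          have h := ET_le z p (le_of_lt hp0) hp1 w hfw
          have hpw : p * w = 2 * M₁ := by rw [hp]; field_simp
          rw [hpw, ← hM₁'] at h
          linarith
        have hvar := E_var (s := s) p
        have hchb := cheb (s := s) p (le_of_lt hp0) hp1 (by nlinarith)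
        set PB := ∑ δ ∈ Finset.univ.filter
            (fun δ : Fin s → Bool => cardR δ < (s * p) / 4), W (s := s) p δ with hPBdef
        have hPBad : PB ≤ 1/9 := by
          have h1 : PB * (3 * ((s:ℝ) * p) / 4) ^ 2 ≤ (s:ℝ) * (p - p ^ 2) :=
            le_trans hchb (le_of_eq hvar)
          have hPB0 : 0 ≤ PB := by
            rw [hPBdef]
            exact Finset.sum_nonneg fun δ _ => W_nonneg (le_of_lt hp0) hp1 δ
          have hsq : 16 * ((s:ℝ) * p) ≤ ((s:ℝ) * p) ^ 2 := by nlinarith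
          have e1 : PB * (9 * ((s:ℝ) * p)) ≤ PB * ((3 * ((s:ℝ) * p) / 4) ^ 2) :=
            mul_le_mul_of_nonneg_left (by nlinarith [hsq]) hPB0
          have e2 : (s:ℝ) * (p - p ^ 2) ≤ (s:ℝ) * p := by
            nlinarith [mul_nonneg (Nat.cast_nonneg (α := ℝ) s) (sq_nonneg p)]
          have e3 : PB * (9 * ((s:ℝ) * p)) ≤ (s:ℝ) * p := le_trans e1 (le_trans h1 e2)
          have spp : (0:ℝ) < (s:ℝ) * p := by linarith
          nlinarith [e3, spp]
        by_contra hcon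
        push_neg at hcon
        have hTbig : ∀ δ : Fin s → Bool,
            ¬ cardR δ < (s * p) / 4 → 4 * M₁ < T z (fun i => indR (δ i)) := by
          intro δ hcge'
          have hcge : (s * p) / 4 ≤ cardR δ := not_lt.mp hcge'
          set τ := Finset.univ.filter (fun i => δ i = true) with hτ
          have hcardτ : (τ.card : ℝ) = cardR δ := by
            rw [cardR,
              Finset.sum_congr rfl fun i (_ : i ∈ Finset.univ) =>
                show indR (δ i) = if δ i = true then (1:ℝ) else 0 from by
                  cases h : δ i <;> simp [indR, h],
              Finset.sum_boole, hτ]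
          have hA : (s : ℝ) * M₁ / (2 * w) ≤ (τ.card : ℝ) := by
            rw [hcardτ, ← hr_eq]; exact hcge
          obtain ⟨t, ht⟩ := hcon τ hA
          obtain ⟨hmx0, hmx⟩ := hmxfacts τ t
          have hnb := norm_sum_le_T z τ t _ hmx0 hmx
          have hind : (fun i => if i ∈ τ then (1:ℝ) else 0) = fun i => indR (δ i) := by
            funext i
            rw [hτ]
            by_cases h : δ i = true <;> simp [h, indR]
          rw [hind] at hnb
          have hmxpos : 0 < ⨆ i ∈ τ, |t i| := by
            rcases lt_or_eq_of_le hmx0 with h | h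
            · exact h
            · exfalso
              rw [← h, zero_mul] at hnb
              rw [← h, mul_zero] at ht
              linarith
          nlinarith [lt_of_lt_of_le ht hnb, hmxpos]
        have hsplit := Finset.sum_filter_add_sum_filter_not Finset.univ
          (fun δ : Fin s → Bool => cardR δ < (s * p) / 4) (W (s := s) p)
        rw [W_sum] at hsplit
        set Good := Finset.univ.filter
          (fun δ : Fin s → Bool => ¬ cardR δ < (s * p) / 4) with hGood
        have hPGood : (8:ℝ)/9 ≤ ∑ δ ∈ Good, W (s := s) p δ := by
          rw [hGood]; linarith
        have h3 : ∑ δ ∈ Good, W (s := s) p δ * T z (fun i => indR (δ i))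
            ≤ ∑ δ : Fin s → Bool, W (s := s) p δ * T z (fun i => indR (δ i)) :=
          Finset.sum_le_sum_of_subset_of_nonneg (Finset.filter_subset _ _)
            fun δ _ _ => mul_nonneg (W_nonneg (le_of_lt hp0) hp1 δ) (T_nonneg z _)
        have h4 : ∑ δ ∈ Good, W (s := s) p δ * (4 * M₁)
            ≤ ∑ δ ∈ Good, W (s := s) p δ * T z (fun i => indR (δ i)) := by
          refine Finset.sum_le_sum fun δ hδ => ?_
          have hδ' : ¬ cardR δ < (s * p) / 4 := (Finset.mem_filter.mp hδ).2
          exact mul_le_mul_of_nonneg_left (le_of_lt (hTbig δ hδ'))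
            (W_nonneg (le_of_lt hp0) hp1 δ)
        have h5 : (∑ δ ∈ Good, W (s := s) p δ) * (4 * M₁)
            = ∑ δ ∈ Good, W (s := s) p δ * (4 * M₁) := Finset.sum_mul _ _ _
        nlinarith [hPGood, h3, h4, hET, hM₁pos, h5]
end

section
/- (Talagrand's lower ℓ_∞ extraction, statement) Let z'_1, …, z'_l be vectors in a normed space with ‖z'_i‖ ≥ 1 for all i. Set w' = max over all sign choices of ‖∑_{i=1}^l ε_i z'_i‖. Then there exists a subset τ' ⊆ {1,…,l} with |τ'| ≥ l/(8w') such that for all scalars (t_i): ‖∑_{i∈τ'} t_i z'_i‖ ≥ (1/2)·max_{i∈τ'}|t_i|. -/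
open Finset

private lemma sum_prod_bool {l : ℕ} (g : Fin l → Bool → ℝ) :
    ∑ ε : Fin l → Bool, ∏ k, g k (ε k) = ∏ k, (g k false + g k true) := by
  have h : ∀ k : Fin l, g k false + g k true = ∑ b : Bool, g k b := by
    intro k; rw [Fintype.sum_bool]; ring
  simp_rw [h]
  rw [Finset.prod_univ_sum (fun _ => (Finset.univ : Finset Bool)) g, Fintype.piFinset_univ]

private lemma marginal_one {l : ℕ} {p q : ℝ} (hpq : q + p = 1) (i : Fin l) :
    ∑ ε : Fin l → Bool,
      (∏ k, (if ε k then p else q)) * (if ε i then (1:ℝ) else 0) = p := by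
  have h : ∀ ε : Fin l → Bool,
      (∏ k, (if ε k then p else q)) * (if ε i then (1:ℝ) else 0)
      = ∏ k, ((if ε k then p else q) * (if k = i then (if ε k then (1:ℝ) else 0) else 1)) := by
    intro ε
    rw [Finset.prod_mul_distrib,
      Finset.prod_ite_eq' Finset.univ i (fun k => if ε k then (1:ℝ) else 0)]
    simp
  simp_rw [h]
  refine (sum_prod_bool
    (fun k b => (if b then p else q) * (if k = i then (if b then (1:ℝ) else 0) else 1))).trans ?_
  have h2 : ∀ k : Fin l,
      ((if (false : Bool) then p else q) *
          (if k = i then (if (false : Bool) then (1:ℝ) else 0) else 1)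
        + (if (true : Bool) then p else q) *
          (if k = i then (if (true : Bool) then (1:ℝ) else 0) else 1))
      = if k = i then p else 1 := by
    intro k; by_cases hk : k = i <;> simp [hk] <;> linarith
  refine (Finset.prod_congr rfl fun k _ => h2 k).trans ?_
  rw [Finset.prod_ite_eq' Finset.univ i (fun _ => p)]
  simp

private lemma marginal_two {l : ℕ} {p q : ℝ} (hpq : q + p = 1) {i j : Fin l} (hij : j ≠ i) :
    ∑ ε : Fin l → Bool,
      (∏ k, (if ε k then p else q)) * (if ε i then (1:ℝ) else 0) * (if ε j then (1:ℝ) else 0)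
      = p * p := by
  have h : ∀ ε : Fin l → Bool,
      (∏ k, (if ε k then p else q)) * (if ε i then (1:ℝ) else 0) * (if ε j then (1:ℝ) else 0)
      = ∏ k, ((if ε k then p else q) *
          ((if k = i then (if ε k then (1:ℝ) else 0) else 1) *
            (if k = j then (if ε k then (1:ℝ) else 0) else 1))) := by
    intro ε
    simp_rw [Finset.prod_mul_distrib]
    rw [Finset.prod_ite_eq' Finset.univ i (fun k => if ε k then (1:ℝ) else 0),
      Finset.prod_ite_eq' Finset.univ j (fun k => if ε k then (1:ℝ) else 0)]
    simp [mul_assoc]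
  simp_rw [h]
  refine (sum_prod_bool
    (fun k b => (if b then p else q) *
      ((if k = i then (if b then (1:ℝ) else 0) else 1) *
        (if k = j then (if b then (1:ℝ) else 0) else 1)))).trans ?_
  have h2 : ∀ k : Fin l,
      ((if (false : Bool) then p else q) *
          ((if k = i then (if (false : Bool) then (1:ℝ) else 0) else 1) *
            (if k = j then (if (false : Bool) then (1:ℝ) else 0) else 1))
        + (if (true : Bool) then p else q) *
          ((if k = i then (if (true : Bool) then (1:ℝ) else 0) else 1) *
            (if k = j then (if (true : Bool) then (1:ℝ) else 0) else 1)))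
      = (if k = i then p else 1) * (if k = j then p else 1) := by
    intro k
    by_cases hk : k = i <;> by_cases hk' : k = j
    · exact absurd (hk'.symm.trans hk) hij
    all_goals simp [hk, hk', hij, Ne.symm hij] <;> linarith
  refine (Finset.prod_congr rfl fun k _ => h2 k).trans ?_
  rw [Finset.prod_mul_distrib, Finset.prod_ite_eq' Finset.univ i (fun _ => p),
    Finset.prod_ite_eq' Finset.univ j (fun _ => p)]
  simp

/-- Talagrand's lower `ℓ∞` extraction: if `‖z'ᵢ‖ ≥ 1` for all `i` and `w'` is the maximum of
`‖∑ εᵢ z'ᵢ‖` over signs, there is a subset `τ'` of cardinality at least `l/(8w')` on which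
`‖∑_{i∈τ'} tᵢ z'ᵢ‖ ≥ (1/2) max_{i∈τ'}|tᵢ|`. -/
theorem stmt_6 {V : Type*} [NormedAddCommGroup V] [NormedSpace ℝ V]
    (l : ℕ) (z' : Fin l → V) (hz' : ∀ i, 1 ≤ ‖z' i‖) (w' : ℝ)
    (hw' : w' = ⨆ ε : Fin l → Bool, ‖∑ i, (if ε i then (1 : ℝ) else -1) • z' i‖) :
    ∃ τ' : Finset (Fin l),
      (l : ℝ) / (8 * w') ≤ (τ'.card : ℝ) ∧
      ∀ t : Fin l → ℝ, (1 / 2 : ℝ) * ⨆ i ∈ τ', |t i| ≤ ‖∑ i ∈ τ', t i • z' i‖ := by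
  classical
  by_cases hl : l = 0
  · subst hl
    refine ⟨∅, by simp, fun t => ?_⟩
    simp
  have hl1 : 0 < l := Nat.pos_of_ne_zero hl
  have hz0 : ∀ i, z' i ≠ 0 := by
    intro i h
    have := hz' i
    rw [h, norm_zero] at this
    linarith
  choose f hf1 hf2 using fun i => exists_dual_vector ℝ (z' i) (norm_ne_zero_iff.mpr (hz0 i))
  have hf2' : ∀ i, f i (z' i) = ‖z' i‖ := fun i => by simpa using hf2 i
  set a : Fin l → Fin l → ℝ := fun i j => |f i (z' j)| with ha
  have ha0 : ∀ i j, 0 ≤ a i j := fun i j => abs_nonneg _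
  -- sup bound
  have hge : ∀ ε : Fin l → Bool, ‖∑ i, (if ε i then (1:ℝ) else -1) • z' i‖ ≤ w' := by
    intro ε
    rw [hw']
    exact le_ciSup (f := fun ε : Fin l → Bool => ‖∑ i, (if ε i then (1:ℝ) else -1) • z' i‖)
      (Set.Finite.bddAbove (Set.finite_range _)) ε
  -- row sums
  have hrow : ∀ i, ∑ j, a i j ≤ w' := by
    intro i
    set ε : Fin l → Bool := fun j => decide (0 ≤ f i (z' j)) with hε
    have h1 : ∑ j, a i j = f i (∑ j, (if ε j then (1:ℝ) else -1) • z' j) := by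
      rw [map_sum]
      refine Finset.sum_congr rfl fun j _ => ?_
      rw [map_smul, smul_eq_mul, hε]
      simp only
      by_cases hj : 0 ≤ f i (z' j)
      · simp [hj, ha, abs_of_nonneg hj]
      · simp [hj, ha, abs_of_neg (lt_of_not_ge hj)]
    rw [h1]
    calc f i (∑ j, (if ε j then (1:ℝ) else -1) • z' j)
        ≤ ‖f i (∑ j, (if ε j then (1:ℝ) else -1) • z' j)‖ := le_abs_self _
      _ ≤ ‖f i‖ * ‖∑ j, (if ε j then (1:ℝ) else -1) • z' j‖ := (f i).le_opNorm _
      _ = ‖∑ j, (if ε j then (1:ℝ) else -1) • z' j‖ := by rw [hf1 i, one_mul]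
      _ ≤ w' := hge ε
  -- w' ≥ 1
  have hw1 : 1 ≤ w' := by
    obtain ⟨i⟩ : Nonempty (Fin l) := ⟨⟨0, hl1⟩⟩
    have h1 : a i i = ‖z' i‖ := by
      rw [ha]; simp only; rw [hf2' i, abs_of_nonneg (norm_nonneg _)]
    have h2 : a i i ≤ ∑ j, a i j :=
      Finset.single_le_sum (fun j _ => ha0 i j) (Finset.mem_univ i)
    have := hz' i
    linarith [hrow i]
  have hw0 : 0 < w' := lt_of_lt_of_le one_pos hw1
  set p : ℝ := 1 / (4 * w') with hp
  set q : ℝ := 1 - p with hq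
  have hp0 : 0 < p := by rw [hp]; positivity
  have hp4 : p ≤ 1 / 4 := by
    rw [hp]
    rw [div_le_div_iff₀ (by linarith) (by norm_num)]
    linarith
  have hq0 : 0 < q := by rw [hq]; linarith
  have hpq : q + p = 1 := by rw [hq]; ring
  set X : Bool → ℝ := fun b => if b then 1 else 0 with hX
  set W : (Fin l → Bool) → ℝ := fun ε => ∏ k, (if ε k then p else q) with hW
  set F : (Fin l → Bool) → ℝ :=
    fun ε => ∑ i, X (ε i) * (1 - 2 * ∑ j ∈ Finset.univ.erase i, X (ε j) * a i j) with hF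
  have hWpos : ∀ ε, 0 < W ε := by
    intro ε
    rw [hW]
    exact Finset.prod_pos fun k _ => by by_cases h : ε k <;> simp [h, hp0, hq0]
  have hWsum : ∑ ε : Fin l → Bool, W ε = 1 := by
    rw [hW]
    refine (sum_prod_bool (fun _ b => if b then p else q)).trans ?_
    simp [hpq]
  -- expectation of F
  have hexp : ∀ ε, W ε * F ε =
      (∑ i, W ε * X (ε i)) -
        ∑ i, ∑ j ∈ Finset.univ.erase i, 2 * a i j * (W ε * X (ε i) * X (ε j)) := by
    intro ε
    rw [hF]
    simp only
    rw [Finset.mul_sum, ← Finset.sum_sub_distrib]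
    refine Finset.sum_congr rfl fun i _ => ?_
    have h3 : ∑ j ∈ Finset.univ.erase i, 2 * a i j * (W ε * X (ε i) * X (ε j))
        = W ε * X (ε i) * (2 * ∑ j ∈ Finset.univ.erase i, X (ε j) * a i j) := by
      rw [Finset.mul_sum, Finset.mul_sum]
      exact Finset.sum_congr rfl fun j _ => by ring
    rw [h3]; ring
  have hmarg1 : ∀ i, ∑ ε : Fin l → Bool, W ε * X (ε i) = p := by
    intro i
    rw [hW, hX]
    exact marginal_one hpq i
  have hmarg2 : ∀ i : Fin l, ∀ j ∈ Finset.univ.erase i,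
      ∑ ε : Fin l → Bool, W ε * X (ε i) * X (ε j) = p * p := by
    intro i j hj
    rw [hW, hX]
    exact marginal_two hpq (Finset.ne_of_mem_erase hj)
  have hEF : ∑ ε : Fin l → Bool, W ε * F ε
      = l * p - ∑ i, ∑ j ∈ Finset.univ.erase i, 2 * a i j * (p * p) := by
    simp_rw [hexp]
    rw [Finset.sum_sub_distrib]
    congr 1
    · rw [Finset.sum_comm]
      simp_rw [hmarg1]
      simp [mul_comm]
    · rw [Finset.sum_comm]
      refine Finset.sum_congr rfl fun i _ => ?_
      rw [Finset.sum_comm]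
      refine Finset.sum_congr rfl fun j hj => ?_
      rw [← Finset.mul_sum, hmarg2 i j hj]
  -- lower bound on the expectation
  have hA : ∑ i, ∑ j ∈ Finset.univ.erase i, a i j ≤ l * w' := by
    calc ∑ i, ∑ j ∈ Finset.univ.erase i, a i j
        ≤ ∑ i : Fin l, w' := by
          refine Finset.sum_le_sum fun i _ => ?_
          refine le_trans ?_ (hrow i)
          exact Finset.sum_le_sum_of_subset_of_nonneg (Finset.erase_subset _ _)
            (fun j _ _ => ha0 i j)
      _ = l * w' := by simp [mul_comm]
  have hlow : (l : ℝ) / (8 * w') ≤ ∑ ε : Fin l → Bool, W ε * F ε := by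
    rw [hEF]
    have h1 : ∑ i, ∑ j ∈ Finset.univ.erase i, 2 * a i j * (p * p)
        = 2 * (p * p) * ∑ i, ∑ j ∈ Finset.univ.erase i, a i j := by
      rw [Finset.mul_sum]
      refine Finset.sum_congr rfl fun i _ => ?_
      rw [Finset.mul_sum]
      exact Finset.sum_congr rfl fun j _ => by ring
    rw [h1]
    have h2 : 2 * (p * p) * ∑ i, ∑ j ∈ Finset.univ.erase i, a i j
        ≤ 2 * (p * p) * (l * w') := by
      refine mul_le_mul_of_nonneg_left hA (by positivity)
    have h3 : (l : ℝ) * p - 2 * (p * p) * (l * w') = (l : ℝ) / (8 * w') := by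
      rw [hp]
      field_simp
      ring
    linarith
  -- find a good sign pattern
  obtain ⟨ε, -, hε⟩ := Finset.exists_le_of_sum_le
    (Finset.univ_nonempty (α := Fin l → Bool))
    (show ∑ ε : Fin l → Bool, (l : ℝ) / (8 * w') * W ε ≤ ∑ ε : Fin l → Bool, W ε * F ε by
      rw [← Finset.mul_sum, hWsum, mul_one]; exact hlow)
  have hgood : (l : ℝ) / (8 * w') ≤ F ε := by
    have := hWpos ε
    nlinarith
  -- build the subset
  set S : Finset (Fin l) := Finset.univ.filter (fun i => ε i = true) with hS
  set r : Fin l → ℝ := fun i => ∑ j ∈ S.erase i, a i j with hr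
  have hr0 : ∀ i, 0 ≤ r i := fun i => Finset.sum_nonneg fun j _ => ha0 i j
  set τ : Finset (Fin l) := S.filter (fun i => r i ≤ 1 / 2) with hτ
  have hFr : F ε = ∑ i ∈ S, (1 - 2 * r i) := by
    rw [hF]
    simp only
    have h1 : ∀ i : Fin l, ∑ j ∈ Finset.univ.erase i, X (ε j) * a i j = r i := by
      intro i
      rw [hr]
      simp only
      rw [hS, ← Finset.filter_erase, Finset.sum_filter]
      refine Finset.sum_congr rfl fun j _ => ?_
      by_cases hj : ε j = true <;> simp [hj, hX]
    simp_rw [h1]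
    rw [hS, Finset.sum_filter]
    refine Finset.sum_congr rfl fun i _ => ?_
    by_cases hi : ε i = true <;> simp [hi, hX]
  have hcard : (l : ℝ) / (8 * w') ≤ (τ.card : ℝ) := by
    refine le_trans hgood ?_
    rw [hFr]
    have h1 : ∑ i ∈ S, (1 - 2 * r i) ≤ ∑ i ∈ S, (if r i ≤ 1 / 2 then (1:ℝ) else 0) := by
      refine Finset.sum_le_sum fun i _ => ?_
      by_cases hi : r i ≤ 1 / 2
      · simp only [hi, if_true]
        linarith [hr0 i]
      · simp only [hi, if_false]
        push_neg at hi
        linarith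
    have h2 : ∑ i ∈ S, (if r i ≤ 1 / 2 then (1:ℝ) else 0) = (τ.card : ℝ) := by
      rw [hτ, Finset.sum_boole]
    rw [← h2] at *
    linarith
  refine ⟨τ, hcard, fun t => ?_⟩
  rcases Finset.eq_empty_or_nonempty τ with hemp | hne
  · rw [hemp]
    simp
  obtain ⟨i₀, hi₀, hmax⟩ := Finset.exists_max_image τ (fun i => |t i|) hne
  have hM : (⨆ i ∈ τ, |t i|) ≤ |t i₀| :=
    Real.iSup_le (fun i => Real.iSup_le (fun hi => hmax i hi) (abs_nonneg _)) (abs_nonneg _)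
  have hi₀S : i₀ ∈ S := Finset.mem_of_mem_filter i₀ hi₀
  have hri₀ : r i₀ ≤ 1 / 2 := (Finset.mem_filter.mp hi₀).2
  have hτS : τ.erase i₀ ⊆ S.erase i₀ := by
    intro j hj
    rw [Finset.mem_erase] at hj ⊢
    exact ⟨hj.1, Finset.mem_of_mem_filter j hj.2⟩
  have hrowτ : ∑ j ∈ τ.erase i₀, a i₀ j ≤ 1 / 2 := by
    refine le_trans ?_ hri₀
    rw [hr]
    exact Finset.sum_le_sum_of_subset_of_nonneg hτS (fun j _ _ => ha0 i₀ j)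
  -- main estimate
  have hval : f i₀ (∑ i ∈ τ, t i • z' i)
      = t i₀ * ‖z' i₀‖ + ∑ i ∈ τ.erase i₀, t i * f i₀ (z' i) := by
    rw [map_sum]
    have : ∀ i ∈ τ, f i₀ (t i • z' i) = t i * f i₀ (z' i) := by
      intro i _
      rw [map_smul, smul_eq_mul]
    rw [Finset.sum_congr rfl this, ← Finset.add_sum_erase _ _ hi₀, hf2' i₀]
  have hRest : |∑ i ∈ τ.erase i₀, t i * f i₀ (z' i)| ≤ |t i₀| * (1 / 2) := by
    calc |∑ i ∈ τ.erase i₀, t i * f i₀ (z' i)|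
        ≤ ∑ i ∈ τ.erase i₀, |t i * f i₀ (z' i)| := Finset.abs_sum_le_sum_abs _ _
      _ ≤ ∑ i ∈ τ.erase i₀, |t i₀| * a i₀ i := by
          refine Finset.sum_le_sum fun i hi => ?_
          rw [abs_mul]
          exact mul_le_mul_of_nonneg_right (hmax i (Finset.mem_of_mem_erase hi))
            (abs_nonneg _) |>.trans (le_of_eq rfl)
      _ = |t i₀| * ∑ i ∈ τ.erase i₀, a i₀ i := by rw [Finset.mul_sum]
      _ ≤ |t i₀| * (1 / 2) := mul_le_mul_of_nonneg_left hrowτ (abs_nonneg _)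
  have hkey : |t i₀| * (1 / 2) ≤ ‖∑ i ∈ τ, t i • z' i‖ := by
    have h1 : |f i₀ (∑ i ∈ τ, t i • z' i)| ≤ ‖∑ i ∈ τ, t i • z' i‖ := by
      have := (f i₀).le_opNorm (∑ i ∈ τ, t i • z' i)
      rw [hf1 i₀, one_mul] at this
      exact this
    have h2 : |t i₀| * ‖z' i₀‖ - |∑ i ∈ τ.erase i₀, t i * f i₀ (z' i)|
        ≤ |f i₀ (∑ i ∈ τ, t i • z' i)| := by
      rw [hval]
      calc |t i₀| * ‖z' i₀‖ - |∑ i ∈ τ.erase i₀, t i * f i₀ (z' i)|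
          = |t i₀ * ‖z' i₀‖| - |∑ i ∈ τ.erase i₀, t i * f i₀ (z' i)| := by
            rw [abs_mul, abs_of_nonneg (norm_nonneg _)]
        _ ≤ |t i₀ * ‖z' i₀‖ + ∑ i ∈ τ.erase i₀, t i * f i₀ (z' i)| := by
            have := abs_add_le (t i₀ * ‖z' i₀‖ + ∑ i ∈ τ.erase i₀, t i * f i₀ (z' i))
              (-(∑ i ∈ τ.erase i₀, t i * f i₀ (z' i)))
            simp at this
            linarith [abs_sub_abs_le_abs_sub (t i₀ * ‖z' i₀‖)
              (-(∑ i ∈ τ.erase i₀, t i * f i₀ (z' i))),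
              (show |t i₀ * ‖z' i₀‖| = |t i₀| * ‖z' i₀‖ by rw [abs_mul, abs_of_nonneg (norm_nonneg _)])]
    have h3 : |t i₀| * 1 ≤ |t i₀| * ‖z' i₀‖ :=
      mul_le_mul_of_nonneg_left (hz' i₀) (abs_nonneg _)
    nlinarith [hRest, abs_nonneg (t i₀)]
  have : (1 / 2 : ℝ) * ⨆ i ∈ τ, |t i| ≤ (1 / 2) * |t i₀| := by linarith [hM]
  linarith [hkey]
end
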